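/- Let R be a ring with a descending G-filtration over an ordered group (G,<), and let Rees(R) = ⊕_{g∈G} (F_g R)·g ⊆ R[G] be the Rees ring. Let J be the ideal of Rees(R) generated by the elements g with g < 1. Then J = ⊕_{g∈G} (F_{>g} R)·g and Rees(R)/J is isomorphic as a G-graded ring to the associated graded ring gr(R). -/

import Mathlib

/-- An abstract characterization of the associated graded ring `gr(R) = ⊕_g F g / F_{>g}`
of a descending `G`-filtration `F` of `R`:  a ring `A` together with maps
`φ g : F g → A` (given as `φ : G → R → A`, meaningful on `F g`) sending `x ∈ F g` to its
class in the degree-`g` component, so that `φ g x = 0` iff `x ∈ F_{>g} = Σ_{h>g} F h`,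
multiplication of components is induced by that of `R`, the images of the `φ g` generate
`A` additively, and components of distinct degrees are independent. -/
structure IsAssociatedGradedRing (R : Type) [Ring R] (G : Type) [Group G] [LinearOrder G]
    (F : G → Set R) (A : Type) [Ring A] (φ : G → R → A) : Prop where
  map_add : ∀ g : G, ∀ x y : R, x ∈ F g → y ∈ F g → φ g (x + y) = φ g x + φ g y
  zero_iff : ∀ g : G, ∀ x : R, x ∈ F g → (φ g x = 0 ↔ (x = 0 ∨ ∃ h > g, x ∈ F h))
  map_mul : ∀ g h : G, ∀ x y : R, x ∈ F g → y ∈ F h → φ g x * φ h y = φ (g * h) (x * y)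
  map_one : φ 1 1 = 1
  gen : AddSubgroup.closure (⋃ g : G, φ g '' F g) = (⊤ : AddSubgroup A)
  indep : ∀ (s : Finset G) (c : G → R), (∀ g ∈ s, c g ∈ F g) →
    (∑ g ∈ s, φ g (c g)) = 0 → ∀ g ∈ s, φ g (c g) = 0

set_option maxHeartbeats 1000000 in
/-- Let `R` be a ring with a descending `G`-filtration `{F g}` over an
ordered group `(G,<)`, and let `Rees(R) = ⊕_g (F g)·g ⊆ R[G]` be the Rees ring, realized
as the subring `S` of the group ring `R[G]` of those elements whose `g`-coefficient lies
in `F g`.  Let `J` be the (two-sided) ideal of `S` generated by the elements `g` with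
`g < 1`.  Then `J = ⊕_g (F_{>g})·g`, i.e. `x ∈ J` iff each coefficient `x g` lies in
`F_{>g} = Σ_{h>g} F h`; and `S/J` is isomorphic, as a `G`-graded ring, to the associated
graded ring `gr(R)`: for any realization `(A, φ)` of `gr(R)` there is a ring isomorphism
`S/J ≃+* A` carrying the class of `(x)·g` (for `x ∈ F g`) to `φ g x`. -/
theorem rees_ring_mod_ideal_iso_associated_graded
    (R : Type) [Ring R]
    (G : Type) [Group G] [LinearOrder G]
    [CovariantClass G G (· * ·) (· < ·)]
    [CovariantClass G G (Function.swap (· * ·)) (· < ·)]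
    (F : G → Set R)
    (hsub : ∀ g : G, (0 : R) ∈ F g ∧ (∀ x y, x ∈ F g → y ∈ F g → x + y ∈ F g) ∧
        (∀ x, x ∈ F g → -x ∈ F g))
    (hF1 : ∀ g h : G, g ≤ h → F h ⊆ F g)
    (hF2 : ∀ g h : G, ∀ x ∈ F g, ∀ y ∈ F h, x * y ∈ F (g * h))
    (hF3 : (1 : R) ∈ F 1)
    (hF4 : ∀ x : R, ∃ g : G, x ∈ F g)
    -- the Rees ring, as a subring of the group ring `R[G]`
    (S : Subring (MonoidAlgebra R G))
    (hS : ∀ f : MonoidAlgebra R G, f ∈ S ↔ ∀ g : G, f.coeff g ∈ F g)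
    -- the two-sided ideal of `S` generated by the group elements `g < 1`
    (J : TwoSidedIdeal S)
    (hJ : J = TwoSidedIdeal.span
      {x : S | ∃ g : G, g < 1 ∧ (x : MonoidAlgebra R G) = MonoidAlgebra.single g 1}) :
    -- (a)  `J = ⊕_g (F_{>g} R)·g`
    (∀ x : S, x ∈ J ↔ ∀ g : G,
      ((x : MonoidAlgebra R G).coeff g = 0 ∨ ∃ h > g, (x : MonoidAlgebra R G).coeff g ∈ F h)) ∧
    -- (b)  `Rees(R)/J ≅ gr(R)` as `G`-graded rings
    (∀ (A : Type) [Ring A] (φ : G → R → A), IsAssociatedGradedRing R G F A φ →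
      ∃ e : J.ringCon.Quotient ≃+* A,
        ∀ (g : G) (x : R) (_ : x ∈ F g)
          (hxS : (MonoidAlgebra.single g x : MonoidAlgebra R G) ∈ S),
          e (J.ringCon.mk' ⟨MonoidAlgebra.single g x, hxS⟩) = φ g x) := by
  classical
  have hzero : ∀ g : G, (0 : R) ∈ F g := fun g => (hsub g).1
  have haddF : ∀ g : G, ∀ x y : R, x ∈ F g → y ∈ F g → x + y ∈ F g := fun g => (hsub g).2.1
  -- membership of singles in S
  have hsingle_mem : ∀ (g : G) (x : R), x ∈ F g →
      (MonoidAlgebra.single g x : MonoidAlgebra R G) ∈ S := by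
    intro g x hx
    rw [hS]
    intro k
    rcases eq_or_ne g k with rfl | hne
    · simpa using hx
    · simp only [MonoidAlgebra.coeff_single, Finsupp.single_apply, if_neg hne]
      exact hzero k
  have hmemF : ∀ (x : S) (g : G), (x : MonoidAlgebra R G).coeff g ∈ F g :=
    fun x g => (hS x).1 x.2 g
  -- the coefficientwise condition
  set P : G → R → Prop := fun g r => r = 0 ∨ ∃ h > g, r ∈ F h with hP
  have hP0 : ∀ g, P g 0 := fun g => Or.inl rfl
  have hPadd : ∀ g r s, P g r → P g s → P g (r + s) := by
    intro g r s hr hs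
    rcases hr with rfl | ⟨h1, hg1, hr⟩
    · simpa using hs
    rcases hs with rfl | ⟨h2, hg2, hs⟩
    · simpa using Or.inr ⟨h1, hg1, hr⟩
    · exact Or.inr ⟨min h1 h2, lt_min hg1 hg2,
        haddF _ _ _ (hF1 _ _ (min_le_left _ _) hr) (hF1 _ _ (min_le_right _ _) hs)⟩
  have hPneg : ∀ g r, P g r → P g (-r) := by
    intro g r hr
    rcases hr with rfl | ⟨h, hg, hr⟩
    · simp [hP]
    · exact Or.inr ⟨h, hg, (hsub h).2.2 _ hr⟩
  have hPsum : ∀ (g : G) (ι : Type) (t : Finset ι) (f : ι → R),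
      (∀ i ∈ t, P g (f i)) → P g (∑ i ∈ t, f i) := by
    intro g ι t f hf
    exact Finset.sum_induction f (P g) (fun a b => hPadd g a b) (hP0 g) hf
  -- K, as a two-sided ideal of S
  have Kzero : (0 : S) ∈ {x : S | ∀ g : G, P g ((x : MonoidAlgebra R G).coeff g)} := by
    intro g; simpa using hP0 g
  have Kadd : ∀ {x y : S}, (∀ g : G, P g ((x : MonoidAlgebra R G).coeff g)) →
      (∀ g : G, P g ((y : MonoidAlgebra R G).coeff g)) →
      (∀ g : G, P g (((x + y : S) : MonoidAlgebra R G).coeff g)) := by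
    intro x y hx hy g
    have : ((x + y : S) : MonoidAlgebra R G).coeff g
        = (x : MonoidAlgebra R G).coeff g + (y : MonoidAlgebra R G).coeff g := rfl
    rw [this]
    exact hPadd g _ _ (hx g) (hy g)
  have Kmul_left : ∀ {x y : S}, (∀ g : G, P g ((y : MonoidAlgebra R G).coeff g)) →
      (∀ g : G, P g (((x * y : S) : MonoidAlgebra R G).coeff g)) := by
    intro x y hy k
    have : ((x * y : S) : MonoidAlgebra R G).coeff k
        = ((x : MonoidAlgebra R G) * (y : MonoidAlgebra R G)).coeff k := rfl
    rw [this, MonoidAlgebra.mul_apply]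
    apply hPsum
    intro a _
    apply hPsum
    intro b _
    dsimp only
    by_cases hab : a * b = k
    · rw [if_pos hab]
      rcases hy b with hb0 | ⟨h, hbh, hbF⟩
      · rw [hb0, mul_zero]; exact hP0 k
      · refine Or.inr ⟨a * h, ?_, hF2 a h _ (hmemF x a) _ hbF⟩
        calc k = a * b := hab.symm
        _ < a * h := mul_lt_mul_right hbh a
    · rw [if_neg hab]; exact hP0 k
  have Kmul_right : ∀ {x y : S}, (∀ g : G, P g ((x : MonoidAlgebra R G).coeff g)) →
      (∀ g : G, P g (((x * y : S) : MonoidAlgebra R G).coeff g)) := by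
    intro x y hx k
    have : ((x * y : S) : MonoidAlgebra R G).coeff k
        = ((x : MonoidAlgebra R G) * (y : MonoidAlgebra R G)).coeff k := rfl
    rw [this, MonoidAlgebra.mul_apply]
    apply hPsum
    intro a _
    apply hPsum
    intro b _
    dsimp only
    by_cases hab : a * b = k
    · rw [if_pos hab]
      rcases hx a with ha0 | ⟨h, hah, haF⟩
      · rw [ha0, zero_mul]; exact hP0 k
      · refine Or.inr ⟨h * b, ?_, hF2 h b _ haF _ (hmemF y b)⟩
        calc k = a * b := hab.symm
        _ < h * b := mul_lt_mul_left hah b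
    · rw [if_neg hab]; exact hP0 k
  set K : TwoSidedIdeal S := TwoSidedIdeal.mk'
    {x : S | ∀ g : G, P g ((x : MonoidAlgebra R G).coeff g)}
    Kzero (fun hx hy => Kadd hx hy)
    (fun {x} hx g => by
      have : ((-x : S) : MonoidAlgebra R G).coeff g = -((x : MonoidAlgebra R G).coeff g) := rfl
      rw [this]; exact hPneg g _ (hx g))
    (fun hy => Kmul_left hy) (fun hx => Kmul_right hx) with hK
  -- the canonical decomposition of an element of S into singles
  have hsgl : ∀ (x : S),
      x = ∑ g ∈ (x : MonoidAlgebra R G).coeff.support,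
        (⟨MonoidAlgebra.single g ((x : MonoidAlgebra R G).coeff g),
          hsingle_mem g _ (hmemF x g)⟩ : S) := by
    intro x
    apply Subtype.ext
    push_cast
    exact (MonoidAlgebra.sum_coeff_single (x : MonoidAlgebra R G)).symm
  -- single elements whose coefficient lies higher are in J
  have hsingle_J : ∀ (g : G) (r : R) (hr : r ∈ F g), P g r →
      (⟨MonoidAlgebra.single g r, hsingle_mem g r hr⟩ : S) ∈ J := by
    intro g r hr hPr
    rcases hPr with rfl | ⟨h, hgh, hrh⟩
    · have : (⟨MonoidAlgebra.single g (0:R), hsingle_mem g 0 hr⟩ : S) = 0 := by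
        apply Subtype.ext; simp
      rw [this]; exact zero_mem J
    · have hb1 : (1 : R) ∈ F (h⁻¹ * g) := hF1 _ 1 (le_of_lt (by
        have : h⁻¹ * g < h⁻¹ * h := mul_lt_mul_right hgh h⁻¹
        simpa using this)) hF3
      set a : S := ⟨MonoidAlgebra.single h r, hsingle_mem h r hrh⟩ with ha
      set b : S := ⟨MonoidAlgebra.single (h⁻¹ * g) (1:R), hsingle_mem _ 1 hb1⟩ with hb
      have hbJ : b ∈ J := by
        rw [hJ]
        apply TwoSidedIdeal.subset_span
        exact ⟨h⁻¹ * g, by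
          have : h⁻¹ * g < h⁻¹ * h := mul_lt_mul_right hgh h⁻¹
          simpa using this, rfl⟩
      have hab : a * b = ⟨MonoidAlgebra.single g r, hsingle_mem g r hr⟩ := by
        apply Subtype.ext
        show (MonoidAlgebra.single h r : MonoidAlgebra R G) * MonoidAlgebra.single (h⁻¹ * g) 1
          = MonoidAlgebra.single g r
        rw [MonoidAlgebra.single_mul_single, mul_one, mul_inv_cancel_left]
      rw [← hab]
      exact J.mul_mem_left a b hbJ
  -- part (a)
  have partA : ∀ x : S, x ∈ J ↔ ∀ g : G, P g ((x : MonoidAlgebra R G).coeff g) := by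
    intro x
    constructor
    · intro hx
      rw [hJ, TwoSidedIdeal.mem_span_iff] at hx
      have hxK : x ∈ K := by
        apply hx K
        rintro y ⟨g, hg1, hy⟩
        rw [hK, SetLike.mem_coe, TwoSidedIdeal.mem_mk']
        intro k
        rw [hy]
        rcases eq_or_ne g k with rfl | hne
        · refine Or.inr ⟨1, hg1, ?_⟩
          simpa using hF3
        · simp only [MonoidAlgebra.coeff_single, Finsupp.single_apply, if_neg hne]
          exact hP0 k
      rwa [hK, TwoSidedIdeal.mem_mk'] at hxK
    · intro hx
      rw [hsgl x]
      apply sum_mem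
      intro g _
      exact hsingle_J g _ (hmemF x g) (hx g)
  refine ⟨partA, ?_⟩
  -- part (b)
  intro A _ φ H
  have hφ0 : ∀ g : G, φ g (0 : R) = 0 := by
    intro g
    have h1 := H.map_add g 0 0 (hzero g) (hzero g)
    rw [add_zero] at h1
    exact (add_left_cancel (a := φ g 0) (by rw [← h1, add_zero])).symm
  set Φfun : S → A := fun x =>
    ∑ g ∈ (x : MonoidAlgebra R G).coeff.support, φ g ((x : MonoidAlgebra R G).coeff g) with hΦ
  have hΦsup : ∀ (x : S) (t : Finset G), (x : MonoidAlgebra R G).coeff.support ⊆ t →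
      Φfun x = ∑ g ∈ t, φ g ((x : MonoidAlgebra R G).coeff g) := by
    intro x t ht
    apply Finset.sum_subset ht
    intro g _ hg
    rw [Finsupp.notMem_support_iff.mp hg, hφ0]
  have hΦadd : ∀ x y : S, Φfun (x + y) = Φfun x + Φfun y := by
    intro x y
    have hxy : ((x + y : S) : MonoidAlgebra R G)
        = (x : MonoidAlgebra R G) + (y : MonoidAlgebra R G) := rfl
    set t := (x : MonoidAlgebra R G).coeff.support ∪ (y : MonoidAlgebra R G).coeff.support with hts
    have h1 : Φfun (x + y) = ∑ g ∈ t, φ g (((x + y : S) : MonoidAlgebra R G).coeff g) :=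
      hΦsup _ t (by rw [hxy]; exact Finsupp.support_add)
    rw [h1, hΦsup x t Finset.subset_union_left, hΦsup y t Finset.subset_union_right,
      ← Finset.sum_add_distrib]
    apply Finset.sum_congr rfl
    intro g _
    have : ((x + y : S) : MonoidAlgebra R G).coeff g
        = (x : MonoidAlgebra R G).coeff g + (y : MonoidAlgebra R G).coeff g := rfl
    rw [this]
    exact H.map_add g _ _ (hmemF x g) (hmemF y g)
  set ΦAdd : S →+ A := AddMonoidHom.mk' Φfun hΦadd with hΦAdd
  have hΦsingle : ∀ (g : G) (r : R) (hr : (MonoidAlgebra.single g r : MonoidAlgebra R G) ∈ S),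
      Φfun ⟨MonoidAlgebra.single g r, hr⟩ = φ g r := by
    intro g r hr
    have hrfl : Φfun ⟨MonoidAlgebra.single g r, hr⟩
        = ∑ k ∈ (MonoidAlgebra.single g r : MonoidAlgebra R G).coeff.support,
            φ k ((MonoidAlgebra.single g r : MonoidAlgebra R G).coeff k) := rfl
    by_cases h0 : r = 0
    · subst h0
      rw [hrfl, show (MonoidAlgebra.single g (0:R) : MonoidAlgebra R G).coeff.support = ∅ by simp,
        Finset.sum_empty, hφ0]
    · rw [hrfl, MonoidAlgebra.coeff_single, Finsupp.support_single_ne_zero g h0, Finset.sum_singleton,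
        Finsupp.single_eq_same]
  have hΦmul : ∀ x y : S, Φfun (x * y) = Φfun x * Φfun y := by
    intro x y
    set sx := (x : MonoidAlgebra R G).coeff.support
    set sy := (y : MonoidAlgebra R G).coeff.support
    set xa : G → S := fun g => ⟨MonoidAlgebra.single g ((x : MonoidAlgebra R G).coeff g),
      hsingle_mem g _ (hmemF x g)⟩ with hxa
    set yb : G → S := fun g => ⟨MonoidAlgebra.single g ((y : MonoidAlgebra R G).coeff g),
      hsingle_mem g _ (hmemF y g)⟩ with hyb
    have hxys : x * y = ∑ a ∈ sx, ∑ b ∈ sy, xa a * yb b := by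
      conv_lhs => rw [hsgl x, hsgl y]
      rw [Finset.sum_mul_sum]
    have hterm : ∀ a b : G, Φfun (xa a * yb b)
        = φ a ((x : MonoidAlgebra R G).coeff a) * φ b ((y : MonoidAlgebra R G).coeff b) := by
      intro a b
      have habS : (MonoidAlgebra.single (a * b)
          ((x : MonoidAlgebra R G).coeff a * (y : MonoidAlgebra R G).coeff b) : MonoidAlgebra R G) ∈ S :=
        hsingle_mem _ _ (hF2 a b _ (hmemF x a) _ (hmemF y b))
      have : xa a * yb b = ⟨_, habS⟩ := by
        apply Subtype.ext
        show (MonoidAlgebra.single a ((x : MonoidAlgebra R G).coeff a) : MonoidAlgebra R G)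
            * MonoidAlgebra.single b ((y : MonoidAlgebra R G).coeff b) = _
        rw [MonoidAlgebra.single_mul_single]
      rw [this, hΦsingle]
      exact (H.map_mul a b _ _ (hmemF x a) (hmemF y b)).symm
    have hL : Φfun (x * y) = ∑ a ∈ sx, ∑ b ∈ sy, Φfun (xa a * yb b) := by
      rw [hxys]
      rw [show Φfun = ⇑ΦAdd from rfl]
      rw [map_sum]
      apply Finset.sum_congr rfl
      intro a _
      rw [map_sum]
    rw [hL]
    have hR : Φfun x * Φfun y = ∑ a ∈ sx, ∑ b ∈ sy,
        φ a ((x : MonoidAlgebra R G).coeff a) * φ b ((y : MonoidAlgebra R G).coeff b) := by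
      rw [hΦsup x sx subset_rfl, hΦsup y sy subset_rfl, Finset.sum_mul_sum]
    rw [hR]
    exact Finset.sum_congr rfl fun a _ => Finset.sum_congr rfl fun b _ => hterm a b
  have hΦone : Φfun 1 = 1 := by
    have h1 : (1 : S) = ⟨MonoidAlgebra.single 1 1, hsingle_mem 1 1 hF3⟩ := by
      apply Subtype.ext
      exact MonoidAlgebra.one_def
    rw [h1, hΦsingle, H.map_one]
  have hΦzero : Φfun 0 = 0 := by
    rw [hΦsup 0 ∅ (by simp), Finset.sum_empty]
  -- kernel
  have hker : ∀ x : S, Φfun x = 0 ↔ x ∈ J := by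
    intro x
    rw [partA]
    constructor
    · intro hx g
      by_cases hg : g ∈ (x : MonoidAlgebra R G).coeff.support
      · have := H.indep (x : MonoidAlgebra R G).coeff.support
          (fun g => (x : MonoidAlgebra R G).coeff g) (fun g _ => hmemF x g) hx g hg
        exact (H.zero_iff g _ (hmemF x g)).1 this
      · exact Or.inl (Finsupp.notMem_support_iff.mp hg)
    · intro hx
      show ∑ g ∈ (x : MonoidAlgebra R G).coeff.support, φ g ((x : MonoidAlgebra R G).coeff g) = 0
      apply Finset.sum_eq_zero
      intro g _
      exact (H.zero_iff g _ (hmemF x g)).2 (hx g)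
  have key : ∀ a b : S, J.ringCon a b → Φfun a = Φfun b := by
    intro a b hab
    rw [J.rel_iff] at hab
    have h0 : Φfun (a - b) = 0 := (hker _).2 hab
    have h1 : Φfun (a - b + b) = Φfun (a - b) + Φfun b := hΦadd _ _
    rw [sub_add_cancel, h0, zero_add] at h1
    exact h1
  let Φq : J.ringCon.Quotient →+* A :=
    { toFun := Quotient.lift Φfun key
      map_one' := hΦone
      map_mul' := fun u v => Quotient.inductionOn₂ u v fun a b => hΦmul a b
      map_zero' := hΦzero
      map_add' := fun u v => Quotient.inductionOn₂ u v fun a b => hΦadd a b }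
  have hΦqmk : ∀ s : S, Φq (J.ringCon.mk' s) = Φfun s := fun s => rfl
  have hinj : Function.Injective Φq := by
    intro u v
    refine Quotient.inductionOn₂ u v ?_
    intro a b h
    have hab : Φfun a = Φfun b := h
    show (a : J.ringCon.Quotient) = (b : J.ringCon.Quotient)
    rw [RingCon.eq, J.rel_iff]
    apply (hker _).1
    have h1 : Φfun (a - b + b) = Φfun (a - b) + Φfun b := hΦadd _ _
    rw [sub_add_cancel, hab] at h1
    have := add_right_cancel (b := Φfun b) (a := Φfun (a - b)) (c := 0)
    rw [← h1] at this
    exact this (by rw [zero_add])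
  have hsurj : Function.Surjective Φq := by
    have hle : AddSubgroup.closure (⋃ g : G, φ g '' F g) ≤
        (Φq.range).toAddSubgroup := by
      apply (AddSubgroup.closure_le _).mpr
      rintro a ha
      rw [Set.mem_iUnion] at ha
      obtain ⟨g, x, hx, rfl⟩ := ha
      refine ⟨J.ringCon.mk' ⟨MonoidAlgebra.single g x, hsingle_mem g x hx⟩, ?_⟩
      rw [hΦqmk, hΦsingle]
    intro a
    have : a ∈ (Φq.range).toAddSubgroup := hle (by rw [H.gen]; trivial)
    exact this
  refine ⟨RingEquiv.ofBijective Φq ⟨hinj, hsurj⟩, ?_⟩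
  intro g x hx hxS
  show Φq (J.ringCon.mk' ⟨MonoidAlgebra.single g x, hxS⟩) = φ g x
  rw [hΦqmk, hΦsingle]
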